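/- Let G be a finite group, k a field of characteristic p, H ≤ G a subgroup of index n coprime to p, and φ : M → N a map of kG-modules. If the restriction of φ to H equals γ ∘ β with β : M|_H → T and γ : T → N|_H for some kH-module T, then the composition of the adjoint maps M → T↑G → N (where T↑G = kG ⊗_{kH} T) equals n·φ. -/

import Mathlib

/-- Let `H ≤ G` have index `n` coprime to `p`, and let `S` be a left transversal of `H` in
`G`. If the restriction to `H` of `φ : M → N` factors as `γ ∘ β` through a `kH`-module `T`,
then the composite of the adjoint maps `M → T↑G → N`, namely
`m ↦ ∑_{s ∈ S} s·γ(β(s⁻¹·m))` (with `β̂(m) = ∑ s ⊗ β(s⁻¹ m)` and `γ̂(g ⊗ t) = g·γ(t)`),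
equals `n · φ`. -/
theorem stmt_1 (p : ℕ) [Fact p.Prime] (k : Type) [Field k] [CharP k p]
    (G : Type) [Group G] [Fintype G] (H : Subgroup G) (hn : Nat.Coprime H.index p)
    (S : Finset G) (hS : ∀ g : G, ∃! s, s ∈ S ∧ s⁻¹ * g ∈ H)
    (M N T : Type) [AddCommGroup M] [Module k M] [AddCommGroup N] [Module k N]
    [AddCommGroup T] [Module k T]
    (ρM : Representation k G M) (ρN : Representation k G N) (ρT : Representation k ↥H T)
    (φ : M →ₗ[k] N) (hφ : ∀ (g : G) (m : M), φ (ρM g m) = ρN g (φ m))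
    (β : M →ₗ[k] T) (hβ : ∀ (h : ↥H) (m : M), β (ρM ↑h m) = ρT h (β m))
    (γ : T →ₗ[k] N) (hγ : ∀ (h : ↥H) (t : T), γ (ρT h t) = ρN ↑h (γ t))
    (hfact : γ.comp β = φ) :
    ∀ m : M, ∑ s ∈ S, ρN s (γ (β (ρM s⁻¹ m))) = (H.index : k) • φ m := by
  intro m
  have hcard : S.card = H.index := by
    have hmem : Subgroup.IsComplement (S : Set G) (H : Set G) := by
      rw [Subgroup.isComplement_iff_existsUnique_inv_mul_mem]
      intro g
      obtain ⟨s, ⟨hs1, hs2⟩, hu⟩ := hS g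
      exact ⟨⟨s, hs1⟩, hs2, fun y hy => Subtype.ext (hu y ⟨y.2, hy⟩)⟩
    have := Subgroup.IsComplement.card_left hmem
    simpa [Nat.card_eq_fintype_card] using this
  have hterm : ∀ s ∈ S, ρN s (γ (β (ρM s⁻¹ m))) = φ m := by
    intro s _
    have : γ (β (ρM s⁻¹ m)) = φ (ρM s⁻¹ m) := by
      rw [← hfact]; rfl
    rw [this, hφ, ← Module.End.mul_apply, ← map_mul, mul_inv_cancel, map_one,
      Module.End.one_apply]
  rw [Finset.sum_congr rfl hterm, Finset.sum_const, hcard, Nat.cast_smul_eq_nsmul]
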